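/- Let H = UΓU* and H̃ = H + δH = ŨΓ̃Ũ* be p×p positive definite Hermitian matrices with U, Ũ unitary and diagonal Γ, Γ̃, and let S = U*Ũ and η = ‖H^{-1/2} δH H^{-1/2}‖₂ < 1. Then for any j and any index set T not containing j, (∑_{i∈T} |S_{ij}|²)^{1/2} ≤ min{1, max_{i∈T} (γ_i^{1/2} γ̃_j^{1/2} / |γ_i − γ̃_j|) · η/√(1−η)}. -/

import Mathlib

open scoped Matrix Matrix.Norms.L2Operator


private lemma col_sum_le_opNorm {p : ℕ} (A : Matrix (Fin p) (Fin p) ℂ) (j : Fin p) :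
    ∑ i, ‖A i j‖ ^ 2 ≤ ‖A‖ ^ 2 := by
  have h := A.l2_opNorm_mulVec (EuclideanSpace.single j (1:ℂ))
  rw [EuclideanSpace.norm_single, norm_one, mul_one] at h
  have hmv : (A *ᵥ (EuclideanSpace.single j (1:ℂ) : EuclideanSpace ℂ (Fin p))) =
      fun i => A i j := by
    funext i
    simp [Matrix.mulVec, dotProduct, EuclideanSpace.single_apply]
  have hnorm : ‖(EuclideanSpace.equiv (Fin p) ℂ).symm
      (A *ᵥ (EuclideanSpace.single j (1:ℂ) : EuclideanSpace ℂ (Fin p)))‖ =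
      Real.sqrt (∑ i, ‖A i j‖ ^ 2) := by
    rw [EuclideanSpace.norm_eq]
    congr 1
    refine Finset.sum_congr rfl fun i _ => ?_
    rw [hmv]
    simp
  rw [hnorm] at h
  have hs : (0:ℝ) ≤ ∑ i, ‖A i j‖ ^ 2 :=
    Finset.sum_nonneg fun i _ => sq_nonneg _
  calc ∑ i, ‖A i j‖ ^ 2
      = (Real.sqrt (∑ i, ‖A i j‖ ^ 2)) ^ 2 := (Real.sq_sqrt hs).symm
    _ ≤ ‖A‖ ^ 2 := pow_le_pow_left₀ (Real.sqrt_nonneg _) h 2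

private lemma unitary_opNorm {p : ℕ} [Nonempty (Fin p)] (A : Matrix (Fin p) (Fin p) ℂ)
    (h : Aᴴ * A = 1) : ‖A‖ = 1 := by
  have h2 : ‖A‖ * ‖A‖ = 1 := by
    rw [← Matrix.l2_opNorm_conjTranspose_mul_self, h, CStarRing.norm_one]
  nlinarith [norm_nonneg A]

set_option maxHeartbeats 1000000 in
/-- Mathias's relative perturbation bound on eigenvector inner products (set form).
`H = U Γ U*` and `H̃ = H + δH = Ũ Γ̃ Ũ*` are positive definite Hermitian with `U`, `Ũ` unitary
and `Γ, Γ̃` diagonal; `S = U* Ũ` and `η = ‖H^{-1/2} δH H^{-1/2}‖₂ < 1`.  Then for any `j` and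
any (nonempty) index set `T` not containing `j`,
`(∑_{i∈T} |S_{ij}|²)^{1/2} ≤ min {1, max_{i∈T} (√γᵢ √γ̃ⱼ / |γᵢ − γ̃ⱼ|) · η / √(1−η)}`
(the second bound stated under the proviso `γᵢ ≠ γ̃ⱼ` on `T`, so each fraction is finite;
otherwise the minimum is `1`). -/
theorem mathias_set_form {p : ℕ}
    (U Ut δH : Matrix (Fin p) (Fin p) ℂ) (γ γt : Fin p → ℝ)
    (hUunit : Uᴴ * U = 1 ∧ U * Uᴴ = 1)
    (hUtunit : Utᴴ * Ut = 1 ∧ Ut * Utᴴ = 1)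
    (hγ : ∀ i, 0 < γ i) (hγt : ∀ i, 0 < γt i)
    (H Ht : Matrix (Fin p) (Fin p) ℂ)
    (hH : H = U * Matrix.diagonal (fun i => (γ i : ℂ)) * Uᴴ)
    (hHt : Ht = Ut * Matrix.diagonal (fun i => (γt i : ℂ)) * Utᴴ)
    (hpert : Ht = H + δH)
    (hδH : δH.IsHermitian)
    (Hinvhalf : Matrix (Fin p) (Fin p) ℂ)
    (hHinvhalf : Hinvhalf = U * Matrix.diagonal (fun i => ((Real.sqrt (γ i))⁻¹ : ℂ)) * Uᴴ)
    (S : Matrix (Fin p) (Fin p) ℂ) (hS : S = Uᴴ * Ut)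
    (η : ℝ) (hη : η = ‖Hinvhalf * δH * Hinvhalf‖) (hη1 : η < 1) :
    ∀ j : Fin p, ∀ T : Finset (Fin p), j ∉ T → ∀ hT : T.Nonempty,
      Real.sqrt (∑ i ∈ T, ‖S i j‖ ^ 2) ≤ 1 ∧
      ((∀ i ∈ T, γ i ≠ γt j) →
        Real.sqrt (∑ i ∈ T, ‖S i j‖ ^ 2) ≤
          min 1 ((T.sup' hT fun i => Real.sqrt (γ i) * Real.sqrt (γt j) / |γ i - γt j|) *
            (η / Real.sqrt (1 - η)))) := by
  intro j T hjT hT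
  haveI : Nonempty (Fin p) := ⟨j⟩
  classical
  obtain ⟨hU1, hU2⟩ := hUunit
  obtain ⟨hUt1, hUt2⟩ := hUtunit
  -- nonvanishing facts
  have hsγ : ∀ i, Real.sqrt (γ i) ≠ 0 := fun i => (Real.sqrt_pos.mpr (hγ i)).ne'
  have hsγt : ∀ i, Real.sqrt (γt i) ≠ 0 := fun i => (Real.sqrt_pos.mpr (hγt i)).ne'
  -- diagonal matrices
  set D : Matrix (Fin p) (Fin p) ℂ := Matrix.diagonal (fun i => (γ i : ℂ)) with hD
  set Dt : Matrix (Fin p) (Fin p) ℂ := Matrix.diagonal (fun i => (γt i : ℂ)) with hDt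
  set Ds : Matrix (Fin p) (Fin p) ℂ :=
    Matrix.diagonal (fun i => (Real.sqrt (γ i) : ℂ)) with hDs
  set Dsi : Matrix (Fin p) (Fin p) ℂ :=
    Matrix.diagonal (fun i => ((Real.sqrt (γ i))⁻¹ : ℂ)) with hDsi
  set Dsti : Matrix (Fin p) (Fin p) ℂ :=
    Matrix.diagonal (fun i => ((Real.sqrt (γt i))⁻¹ : ℂ)) with hDsti
  set Dti : Matrix (Fin p) (Fin p) ℂ :=
    Matrix.diagonal (fun i => (((γt i)⁻¹ : ℝ) : ℂ)) with hDti
  -- diagonal product facts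
  have dEq : ∀ f g : Fin p → ℂ, (∀ i, f i = g i) → Matrix.diagonal f = Matrix.diagonal g :=
    fun f g h => by rw [show f = g from funext h]
  have dOne : ∀ f : Fin p → ℂ, (∀ i, f i = 1) → Matrix.diagonal f = 1 :=
    fun f h => by rw [show f = fun _ => (1:ℂ) from funext h, Matrix.diagonal_one]
  have hcγ : ∀ i, ((Real.sqrt (γ i) : ℂ)) ≠ 0 := fun i => Complex.ofReal_ne_zero.mpr (hsγ i)
  have hcγt : ∀ i, ((Real.sqrt (γt i) : ℂ)) ≠ 0 := fun i => Complex.ofReal_ne_zero.mpr (hsγt i)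
  have e1 : Dsi * Ds = 1 := by
    rw [hDsi, hDs, Matrix.diagonal_mul_diagonal]
    exact dOne _ fun i => inv_mul_cancel₀ (hcγ i)
  have e2 : Ds * Dsi = 1 := by
    rw [hDsi, hDs, Matrix.diagonal_mul_diagonal]
    exact dOne _ fun i => mul_inv_cancel₀ (hcγ i)
  have hDss : ∀ i, ((γ i : ℝ) : ℂ) = (Real.sqrt (γ i) : ℂ) * (Real.sqrt (γ i) : ℂ) := by
    intro i
    rw [← Complex.ofReal_mul, Real.mul_self_sqrt (hγ i).le]
  have e3 : Dsi * D = Ds := by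
    rw [hDsi, hD, hDs, Matrix.diagonal_mul_diagonal]
    refine dEq _ _ fun i => ?_
    show ((Real.sqrt (γ i) : ℂ))⁻¹ * ((γ i : ℝ) : ℂ) = (Real.sqrt (γ i) : ℂ)
    rw [hDss i, inv_mul_cancel_left₀ (hcγ i)]
  have e4 : D * Dsi = Ds := by
    rw [hDsi, hD, hDs, Matrix.diagonal_mul_diagonal]
    refine dEq _ _ fun i => ?_
    show ((γ i : ℝ) : ℂ) * ((Real.sqrt (γ i) : ℂ))⁻¹ = (Real.sqrt (γ i) : ℂ)
    rw [hDss i, mul_inv_cancel_right₀ (hcγ i)]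
  have e5 : Dti * Dt = 1 := by
    rw [hDti, hDt, Matrix.diagonal_mul_diagonal]
    refine dOne _ fun i => ?_
    show (((γt i)⁻¹ : ℝ) : ℂ) * ((γt i : ℝ) : ℂ) = 1
    rw [← Complex.ofReal_mul, inv_mul_cancel₀ (hγt i).ne', Complex.ofReal_one]
  have e6 : Dt * Dti = 1 := by
    rw [hDti, hDt, Matrix.diagonal_mul_diagonal]
    refine dOne _ fun i => ?_
    show ((γt i : ℝ) : ℂ) * (((γt i)⁻¹ : ℝ) : ℂ) = 1
    rw [← Complex.ofReal_mul, mul_inv_cancel₀ (hγt i).ne', Complex.ofReal_one]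
  have e7 : Dsti * Dsti = Dti := by
    rw [hDsti, hDti, Matrix.diagonal_mul_diagonal]
    refine dEq _ _ fun i => ?_
    show ((Real.sqrt (γt i) : ℂ))⁻¹ * ((Real.sqrt (γt i) : ℂ))⁻¹ = (((γt i)⁻¹ : ℝ) : ℂ)
    rw [← mul_inv, ← Complex.ofReal_mul, Real.mul_self_sqrt (hγt i).le, Complex.ofReal_inv]
  have eSS : Ds * Ds = D := by
    rw [hD, hDs, Matrix.diagonal_mul_diagonal]
    exact dEq _ _ fun i => (hDss i).symm
  -- lifted cancellation
  have lift : ∀ {A B C : Matrix (Fin p) (Fin p) ℂ}, A * B = C →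
      ∀ X : Matrix (Fin p) (Fin p) ℂ, A * (B * X) = C * X := by
    intro A B C h X
    rw [← Matrix.mul_assoc, h]
  -- key derived matrices
  obtain ⟨Hhalf, hHhalf⟩ : ∃ X, X = U * Ds * Uᴴ := ⟨_, rfl⟩
  obtain ⟨Htinvhalf, hHtinvhalf⟩ : ∃ X, X = Ut * Dsti * Utᴴ := ⟨_, rfl⟩
  obtain ⟨Htinv, hHtinv⟩ : ∃ X, X = Ut * Dti * Utᴴ := ⟨_, rfl⟩
  obtain ⟨B, hB⟩ : ∃ X, X = Hinvhalf * δH * Hinvhalf := ⟨_, rfl⟩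
  obtain ⟨F, hF⟩ : ∃ X, X = Hinvhalf * δH * Htinvhalf := ⟨_, rfl⟩
  obtain ⟨C, hC⟩ : ∃ X, X = Hhalf * Htinv * Hhalf := ⟨_, rfl⟩
  obtain ⟨Mm, hMm⟩ : ∃ X, X = Uᴴ * δH * Ut := ⟨_, rfl⟩
  obtain ⟨G, hG⟩ : ∃ X, X = Uᴴ * F * Ut := ⟨_, rfl⟩
  -- master simp set for matrix algebra
  have hIH : Hinvhalf * Hhalf = 1 := by
    rw [hHinvhalf, hHhalf]
    simp only [Matrix.mul_assoc, lift hU1, lift e1, Matrix.one_mul, Matrix.mul_one, hU2]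
  have hHI : Hhalf * Hinvhalf = 1 := by
    rw [hHinvhalf, hHhalf]
    simp only [Matrix.mul_assoc, lift hU1, lift e2, Matrix.one_mul, Matrix.mul_one, hU2]
  have hHH : Hhalf * Hhalf = H := by
    rw [hHhalf, hH]
    simp only [Matrix.mul_assoc, lift hU1, Matrix.one_mul, lift eSS]
  have hIHI : Hinvhalf * H * Hinvhalf = 1 := by
    rw [hHinvhalf, hH]
    simp only [Matrix.mul_assoc, lift hU1, lift e3, lift e2, Matrix.one_mul, Matrix.mul_one, hU2]
  have hHtHtinv : Ht * Htinv = 1 := by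
    rw [hHt, hHtinv]
    simp only [Matrix.mul_assoc, lift hUt1, lift e6, Matrix.one_mul, Matrix.mul_one, hUt2]
  have hHtinvHt : Htinv * Ht = 1 := by
    rw [hHt, hHtinv]
    simp only [Matrix.mul_assoc, lift hUt1, lift e5, Matrix.one_mul, Matrix.mul_one, hUt2]
  have hTT : Htinvhalf * Htinvhalf = Htinv := by
    rw [hHtinvhalf, hHtinv]
    simp only [Matrix.mul_assoc, lift hUt1, lift e7, Matrix.one_mul, Matrix.mul_one]
  have hOneB : Hinvhalf * Ht * Hinvhalf = 1 + B := by
    rw [hpert, hB]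
    rw [Matrix.mul_add, Matrix.add_mul, hIHI]
  have hBC : (1 + B) * C = 1 := by
    rw [← hOneB, hC]
    calc Hinvhalf * Ht * Hinvhalf * (Hhalf * Htinv * Hhalf)
        = Hinvhalf * Ht * (Hinvhalf * Hhalf) * Htinv * Hhalf := by
          simp only [Matrix.mul_assoc]
      _ = Hinvhalf * (Ht * Htinv) * Hhalf := by rw [hIH, Matrix.mul_one]; simp only [Matrix.mul_assoc]
      _ = 1 := by rw [hHtHtinv, Matrix.mul_one, hIH]
  have hCB : C * (1 + B) = 1 := by
    rw [← hOneB, hC]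
    calc Hhalf * Htinv * Hhalf * (Hinvhalf * Ht * Hinvhalf)
        = Hhalf * Htinv * (Hhalf * Hinvhalf) * Ht * Hinvhalf := by
          simp only [Matrix.mul_assoc]
      _ = Hhalf * (Htinv * Ht) * Hinvhalf := by rw [hHI, Matrix.mul_one]; simp only [Matrix.mul_assoc]
      _ = 1 := by rw [hHtinvHt, Matrix.mul_one, hHI]
  -- hermitian-ness of the half inverses
  have hdstar : ∀ f : Fin p → ℝ,
      (Matrix.diagonal fun i => ((f i : ℂ))⁻¹)ᴴ = Matrix.diagonal fun i => ((f i : ℂ))⁻¹ := by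
    intro f
    rw [Matrix.diagonal_conjTranspose]
    refine dEq _ _ fun i => ?_
    show star (((f i : ℝ) : ℂ))⁻¹ = ((f i : ℝ) : ℂ)⁻¹
    simp
  have hDsiStar : Dsiᴴ = Dsi := by rw [hDsi]; exact hdstar fun i => Real.sqrt (γ i)
  have hDstiStar : Dstiᴴ = Dsti := by rw [hDsti]; exact hdstar fun i => Real.sqrt (γt i)
  have hHiH : Hinvhalfᴴ = Hinvhalf := by
    rw [hHinvhalf]
    simp only [Matrix.conjTranspose_mul, Matrix.conjTranspose_conjTranspose, hDsiStar,
      Matrix.mul_assoc]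
  have hHtiH : Htinvhalfᴴ = Htinvhalf := by
    rw [hHtinvhalf]
    simp only [Matrix.conjTranspose_mul, Matrix.conjTranspose_conjTranspose, hDstiStar,
      Matrix.mul_assoc]
  have hFH : Fᴴ = Htinvhalf * δH * Hinvhalf := by
    rw [hF]
    simp only [Matrix.conjTranspose_mul, hHiH, hHtiH, hδH.eq, Matrix.mul_assoc]
  have hFF : F * Fᴴ = B * (C * B) := by
    rw [hFH, hF, hB, hC]
    calc Hinvhalf * δH * Htinvhalf * (Htinvhalf * δH * Hinvhalf)
        = Hinvhalf * δH * (Htinvhalf * Htinvhalf) * δH * Hinvhalf := by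
          simp only [Matrix.mul_assoc]
      _ = Hinvhalf * δH * Htinv * δH * Hinvhalf := by rw [hTT]
      _ = Hinvhalf * δH * Hinvhalf * ((Hhalf * Htinv * Hhalf) * (Hinvhalf * δH * Hinvhalf)) := by
          calc Hinvhalf * δH * Htinv * δH * Hinvhalf
              = Hinvhalf * δH * ((Hinvhalf * Hhalf) * Htinv * (Hhalf * Hinvhalf)) * δH * Hinvhalf := by
                rw [hIH, hHI, Matrix.one_mul, Matrix.mul_one]
            _ = Hinvhalf * δH * Hinvhalf * ((Hhalf * Htinv * Hhalf) * (Hinvhalf * δH * Hinvhalf)) := by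
                simp only [Matrix.mul_assoc]
  -- norm bounds
  have hη0 : 0 ≤ η := hη ▸ norm_nonneg _
  have hnegB : ‖-B‖ < 1 := by rw [norm_neg, hB, ← hη]; exact hη1
  have h1mB : (1 : Matrix (Fin p) (Fin p) ℂ) - -B = 1 + B := sub_neg_eq_add 1 B
  have hCeq : C = ∑' i : ℕ, (-B) ^ i := by
    have hgeo := mul_neg_geom_series (-B) hnegB
    rw [h1mB] at hgeo
    calc C = C * ((1 + B) * ∑' i : ℕ, (-B) ^ i) := by rw [hgeo, Matrix.mul_one]
      _ = C * (1 + B) * ∑' i : ℕ, (-B) ^ i := (Matrix.mul_assoc C _ _).symm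
      _ = ∑' i : ℕ, (-B) ^ i := by rw [hCB, Matrix.one_mul]
  have hBnorm : ‖B‖ = η := by rw [hB]; exact hη.symm
  have hCnorm : ‖C‖ ≤ (1 - η)⁻¹ := by
    have := tsum_geometric_le_of_norm_lt_one (-B) hnegB
    rw [CStarRing.norm_one, norm_neg, hBnorm] at this
    rw [hCeq]
    linarith
  have hFsq : ‖F‖ * ‖F‖ ≤ η * ((1 - η)⁻¹ * η) := by
    have h1 : ‖F * Fᴴ‖ = ‖F‖ * ‖F‖ := by
      calc ‖F * Fᴴ‖ = ‖Fᴴᴴ * Fᴴ‖ := by rw [Matrix.conjTranspose_conjTranspose]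
        _ = ‖Fᴴ‖ * ‖Fᴴ‖ := Matrix.l2_opNorm_conjTranspose_mul_self _
        _ = ‖F‖ * ‖F‖ := by rw [Matrix.l2_opNorm_conjTranspose]
    rw [← h1, hFF]
    calc ‖B * (C * B)‖ ≤ ‖B‖ * ‖C * B‖ := Matrix.l2_opNorm_mul _ _
      _ ≤ ‖B‖ * (‖C‖ * ‖B‖) := by
          refine mul_le_mul_of_nonneg_left ?_ (norm_nonneg _)
          exact Matrix.l2_opNorm_mul _ _
      _ ≤ η * ((1 - η)⁻¹ * η) := by
          rw [hBnorm]
          refine mul_le_mul_of_nonneg_left ?_ hη0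
          exact mul_le_mul_of_nonneg_right hCnorm hη0
  have hUn : ‖Uᴴ‖ = 1 := by
    refine unitary_opNorm _ ?_
    rw [Matrix.conjTranspose_conjTranspose]; exact hU2
  have hUtn : ‖Ut‖ = 1 := unitary_opNorm _ hUt1
  have hGF : ‖G‖ ≤ ‖F‖ := by
    rw [hG]
    calc ‖Uᴴ * F * Ut‖ ≤ ‖Uᴴ * F‖ * ‖Ut‖ := Matrix.l2_opNorm_mul _ _
      _ ≤ ‖Uᴴ‖ * ‖F‖ * ‖Ut‖ := by
          refine mul_le_mul_of_nonneg_right ?_ (norm_nonneg _)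
          exact Matrix.l2_opNorm_mul _ _
      _ = ‖F‖ := by rw [hUn, hUtn, one_mul, mul_one]
  -- entries of S and G
  have hSDt : S * Dt = D * S + Mm := by
    have h1 : Uᴴ * Ht * Ut = S * Dt := by
      rw [hHt, hS]
      simp only [Matrix.mul_assoc, lift hUt1, Matrix.mul_one, Matrix.one_mul, hUt1]
    have h2 : Uᴴ * H * Ut = D * S := by
      rw [hH, hS]
      simp only [Matrix.mul_assoc, lift hU1, Matrix.one_mul]
    have h3 : Uᴴ * Ht * Ut = Uᴴ * H * Ut + Mm := by
      rw [hpert, hMm, Matrix.mul_add, Matrix.add_mul]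
    rw [← h1, h3, h2]
  have hMent : ∀ i, Mm i j = S i j * (γt j : ℂ) - (γ i : ℂ) * S i j := by
    intro i
    have := congrArg (fun A : Matrix (Fin p) (Fin p) ℂ => A i j) hSDt
    simp only [Matrix.add_apply] at this
    rw [hDt] at this
    rw [hD] at this
    rw [Matrix.mul_diagonal, Matrix.diagonal_mul] at this
    linear_combination -this
  have hGM : G = Dsi * (Mm * Dsti) := by
    rw [hG, hF, hMm, hHinvhalf, hHtinvhalf]
    simp only [Matrix.mul_assoc, lift hU1, lift hUt1, Matrix.mul_one, Matrix.one_mul, hUt1]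
  have hGent : ∀ i, G i j =
      ((Real.sqrt (γ i))⁻¹ : ℂ) * (Mm i j * ((Real.sqrt (γt j))⁻¹ : ℂ)) := by
    intro i
    rw [hGM]
    rw [hDsi, hDsti, Matrix.diagonal_mul, Matrix.mul_diagonal]
  -- part 1 : column of unitary
  have hSS : Sᴴ * S = 1 := by
    rw [hS]
    simp only [Matrix.conjTranspose_mul, Matrix.conjTranspose_conjTranspose, Matrix.mul_assoc,
      lift hU2, Matrix.one_mul, Matrix.mul_one, hUt1]
  have hsum1 : ∑ i, ‖S i j‖ ^ 2 = 1 := by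
    have h1 := congrArg (fun A : Matrix (Fin p) (Fin p) ℂ => A j j) hSS
    simp only [Matrix.mul_apply, Matrix.conjTranspose_apply, Matrix.one_apply_eq] at h1
    have h2 : ∀ i : Fin p, star (S i j) * S i j = ((‖S i j‖ ^ 2 : ℝ) : ℂ) := by
      intro i
      rw [show star (S i j) = (starRingEnd ℂ) (S i j) from rfl, mul_comm, Complex.mul_conj,
        Complex.normSq_eq_norm_sq]
      try push_cast
      try ring
    rw [Finset.sum_congr rfl fun i _ => h2 i, ← Complex.ofReal_sum] at h1
    exact_mod_cast h1
  have hsum_nonneg : ∀ (W : Finset (Fin p)), (0:ℝ) ≤ ∑ i ∈ W, ‖S i j‖ ^ 2 :=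
    fun W => Finset.sum_nonneg fun i _ => sq_nonneg _
  have hsubT : ∑ i ∈ T, ‖S i j‖ ^ 2 ≤ 1 := by
    rw [← hsum1]
    exact Finset.sum_le_sum_of_subset_of_nonneg (Finset.subset_univ T)
      (fun i _ _ => sq_nonneg _)
  have part1 : Real.sqrt (∑ i ∈ T, ‖S i j‖ ^ 2) ≤ 1 := by
    have := Real.sqrt_le_sqrt hsubT
    rwa [Real.sqrt_one] at this
  refine ⟨part1, ?_⟩
  -- part 2
  intro hTγ
  set c : Fin p → ℝ := fun i => Real.sqrt (γ i) * Real.sqrt (γt j) / |γ i - γt j| with hc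
  have hc0 : ∀ i, 0 ≤ c i := fun i =>
    div_nonneg (mul_nonneg (Real.sqrt_nonneg _) (Real.sqrt_nonneg _)) (abs_nonneg _)
  set Mc : ℝ := T.sup' hT c with hMcdef
  obtain ⟨i0, hi0⟩ := hT
  have hMc0 : 0 ≤ Mc := le_trans (hc0 i0) (Finset.le_sup' c hi0)
  -- per-entry bound
  have hent : ∀ i ∈ T, ‖S i j‖ = c i * ‖G i j‖ := by
    intro i hi
    have hdiff : γ i - γt j ≠ 0 := sub_ne_zero.mpr (hTγ i hi)
    have habsG : ‖G i j‖ =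
        (Real.sqrt (γ i))⁻¹ * (‖S i j‖ * |γ i - γt j| * (Real.sqrt (γt j))⁻¹) := by
      rw [hGent i, hMent i]
      have h4 : S i j * (γt j : ℂ) - (γ i : ℂ) * S i j
          = S i j * (((γt j - γ i : ℝ)) : ℂ) := by push_cast; ring
      rw [h4]
      simp only [norm_mul, norm_inv, Complex.norm_real, Real.norm_eq_abs]
      rw [abs_of_nonneg (Real.sqrt_nonneg (γ i)), abs_of_nonneg (Real.sqrt_nonneg (γt j)),
        abs_sub_comm (γt j) (γ i)]
      try ring
    rw [habsG]
    simp only [hc]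
    have h2 := hsγ i
    have h3 := hsγt j
    have h4 : |γ i - γt j| ≠ 0 := abs_ne_zero.mpr hdiff
    field_simp
  have hsum2 : ∑ i ∈ T, ‖S i j‖ ^ 2 ≤ Mc ^ 2 * (η * ((1 - η)⁻¹ * η)) := by
    have step1 : ∑ i ∈ T, ‖S i j‖ ^ 2 ≤
        Mc ^ 2 * ∑ i ∈ T, ‖G i j‖ ^ 2 := by
      rw [Finset.mul_sum]
      refine Finset.sum_le_sum fun i hi => ?_
      rw [hent i hi, mul_pow]
      refine mul_le_mul_of_nonneg_right ?_ (sq_nonneg _)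
      exact pow_le_pow_left₀ (hc0 i) (Finset.le_sup' c hi) 2
    have step2 : ∑ i ∈ T, ‖G i j‖ ^ 2 ≤ ‖G‖ ^ 2 := by
      refine le_trans ?_ (col_sum_le_opNorm G j)
      exact Finset.sum_le_sum_of_subset_of_nonneg (Finset.subset_univ T)
        (fun i _ _ => sq_nonneg _)
    have step3 : ‖G‖ ^ 2 ≤ η * ((1 - η)⁻¹ * η) := by
      calc ‖G‖ ^ 2 ≤ ‖F‖ ^ 2 := pow_le_pow_left₀ (norm_nonneg _) hGF 2
        _ = ‖F‖ * ‖F‖ := pow_two _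
        _ ≤ η * ((1 - η)⁻¹ * η) := hFsq
    calc ∑ i ∈ T, ‖S i j‖ ^ 2
        ≤ Mc ^ 2 * ∑ i ∈ T, ‖G i j‖ ^ 2 := step1
      _ ≤ Mc ^ 2 * ‖G‖ ^ 2 := mul_le_mul_of_nonneg_left step2 (sq_nonneg _)
      _ ≤ Mc ^ 2 * (η * ((1 - η)⁻¹ * η)) := mul_le_mul_of_nonneg_left step3 (sq_nonneg _)
  refine le_min part1 ?_
  have h1mη : 0 < 1 - η := by linarith
  have hR0 : 0 ≤ Mc * (η / Real.sqrt (1 - η)) :=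
    mul_nonneg hMc0 (div_nonneg hη0 (Real.sqrt_nonneg _))
  have hRsq : (Mc * (η / Real.sqrt (1 - η))) ^ 2 = Mc ^ 2 * (η * ((1 - η)⁻¹ * η)) := by
    rw [mul_pow, div_pow, Real.sq_sqrt h1mη.le]
    ring
  calc Real.sqrt (∑ i ∈ T, ‖S i j‖ ^ 2)
      ≤ Real.sqrt ((Mc * (η / Real.sqrt (1 - η))) ^ 2) := by
        refine Real.sqrt_le_sqrt ?_
        rw [hRsq]; exact hsum2
    _ = Mc * (η / Real.sqrt (1 - η)) := Real.sqrt_sq hR0
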